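/- Let 0 < β < 1 satisfy Σ_{n=1}^{∞} β^n < 2, and define f : ℓ∞(ℕ) → ℝ by f(x) = limsup_{n→∞} |x_n| + Σ_{n=1}^{∞} β^n (x_n² − x_n/n). Then f is not Gâteaux-differentiable at the point x* = (1/(2n))_{n≥1}, even though f attains its infimum over ℓ∞(ℕ) at x* and f'(x*; e_n) = 0 for all n ≥ 1. -/

import Mathlib

open Filter Topology ENNReal

/-- **Example 3, negative part.** Let `0 < β < 1` with `∑_{n≥1} β^n < 2`, and on `ℓ∞(ℕ)` let
`f x = limsup |x_n| + ∑_{n≥1} β^n (x_n² − x_n/n)`.  Then `f` is not Gâteaux-differentiable at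
`x* = (1/(2n))_n`, even though `f` attains its infimum over `ℓ∞(ℕ)` at `x*` and
`f'(x*; e_n) = 0` for all `n`.
(Here the index `n : ℕ` of the formalization corresponds to `n+1 ≥ 1` of the statement.) -/
theorem statement13 (β : ℝ) (hβ0 : 0 < β) (hβ1 : β < 1)
    (hβ2 : ∑' n : ℕ, β ^ (n + 1) < 2)
    (f : lp (fun _ : ℕ => ℝ) ∞ → ℝ)
    (hf : ∀ x : lp (fun _ : ℕ => ℝ) ∞,
      f x = Filter.limsup (fun n : ℕ => |x n|) atTop +
        ∑' n : ℕ, β ^ (n + 1) * ((x n) ^ 2 - x n / ((n : ℝ) + 1)))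
    (xs : lp (fun _ : ℕ => ℝ) ∞)
    (hxs : ∀ n : ℕ, xs n = 1 / (2 * ((n : ℝ) + 1))) :
    (¬ ∃ F : lp (fun _ : ℕ => ℝ) ∞ →L[ℝ] ℝ,
      ∀ h : lp (fun _ : ℕ => ℝ) ∞,
        Tendsto (fun t : ℝ => (f (xs + t • h) - f xs) / t) (𝓝[≠] (0 : ℝ)) (𝓝 (F h))) ∧
    (∀ x : lp (fun _ : ℕ => ℝ) ∞, f xs ≤ f x) ∧
    (∀ n : ℕ,
      Tendsto (fun t : ℝ => (f (xs + t • lp.single ∞ n (1 : ℝ)) - f xs) / t)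
        (𝓝[≠] (0 : ℝ)) (𝓝 (0 : ℝ))) := by
  -- basic summability
  have hβs : Summable (fun k : ℕ => β ^ (k + 1)) := by
    simp_rw [pow_succ]
    exact (summable_geometric_of_lt_one hβ0.le hβ1).mul_right β
  have hsum : ∀ (c : ℕ → ℝ) (M : ℝ), (∀ k, |c k| ≤ M) →
      Summable (fun k => β ^ (k + 1) * c k) := by
    intro c M hM
    apply Summable.of_norm_bounded (hβs.mul_right M)
    intro k
    rw [Real.norm_eq_abs, abs_mul, abs_pow, abs_of_pos hβ0]
    exact mul_le_mul_of_nonneg_left (hM k) (by positivity)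
  have hbd : ∀ (x : lp (fun _ : ℕ => ℝ) ∞) (k : ℕ), |x k| ≤ ‖x‖ := fun x k =>
    lp.norm_apply_le_norm ENNReal.top_ne_zero x k
  -- coordinates
  have hcoord : ∀ (h : lp (fun _ : ℕ => ℝ) ∞) (t : ℝ) (k : ℕ),
      (xs + t • h) k = xs k + t * h k := by
    intro h t k
    simp [lp.coeFn_add, lp.coeFn_smul, Pi.smul_apply]
    rfl
  -- algebraic identity
  have hid : ∀ (k : ℕ) (y : ℝ), y ^ 2 - y / ((k : ℝ) + 1) = (y - xs k) ^ 2 - (xs k) ^ 2 := by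
    intro k y
    rw [hxs k]
    have hk : ((k : ℝ) + 1) ≠ 0 := by positivity
    field_simp
    ring
  -- summability of the pieces
  have hqsum : ∀ x : lp (fun _ : ℕ => ℝ) ∞,
      Summable (fun k => β ^ (k + 1) * (x k - xs k) ^ 2) := by
    intro x
    apply hsum _ ((‖x‖ + ‖xs‖) ^ 2)
    intro k
    rw [abs_pow (x k - xs k) 2]
    have h1 : |x k - xs k| ≤ ‖x‖ + ‖xs‖ :=
      (abs_sub (x k) (xs k)).trans (add_le_add (hbd x k) (hbd xs k))
    exact pow_le_pow_left₀ (abs_nonneg _) h1 2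
  have hcsum : Summable (fun k => β ^ (k + 1) * (xs k) ^ 2) := by
    apply hsum _ (‖xs‖ ^ 2)
    intro k
    rw [abs_pow (xs k) 2]
    exact pow_le_pow_left₀ (abs_nonneg _) (hbd xs k) 2
  set C : ℝ := ∑' k : ℕ, β ^ (k + 1) * (xs k) ^ 2 with hC
  -- rewritten formula for f
  have hfx : ∀ x : lp (fun _ : ℕ => ℝ) ∞,
      f x = Filter.limsup (fun n : ℕ => |x n|) atTop +
        (∑' k : ℕ, β ^ (k + 1) * (x k - xs k) ^ 2) - C := by
    intro x
    rw [hf x]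
    have he : (fun k : ℕ => β ^ (k + 1) * ((x k) ^ 2 - x k / ((k : ℝ) + 1))) =
        fun k => β ^ (k + 1) * (x k - xs k) ^ 2 - β ^ (k + 1) * (xs k) ^ 2 := by
      funext k
      rw [hid k (x k)]
      ring
    rw [he, (hqsum x).tsum_sub hcsum]
    ring
  -- xs coordinates tend to 0
  have h0 : Tendsto (fun n : ℕ => xs n) atTop (𝓝 0) := by
    have hat : Tendsto (fun n : ℕ => 2 * ((n : ℝ) + 1)) atTop atTop := by
      apply Tendsto.const_mul_atTop two_pos
      exact tendsto_atTop_add_const_right _ 1 tendsto_natCast_atTop_atTop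
    have := hat.inv_tendsto_atTop
    simp_rw [hxs, one_div]
    exact this
  -- value at xs
  have hfxs : f xs = -C := by
    rw [hfx xs]
    have hls : Filter.limsup (fun n : ℕ => |xs n|) atTop = 0 := by
      have : Tendsto (fun n : ℕ => |xs n|) atTop (𝓝 0) := by
        simpa using h0.abs
      exact this.limsup_eq
    simp [hls]
  refine ⟨?_, ?_, ?_⟩
  · -- not Gâteaux differentiable
    rintro ⟨F, hF⟩
    have hones : Memℓp (fun _ : ℕ => (1 : ℝ)) ∞ := by
      apply memℓp_infty
      refine ⟨1, ?_⟩
      rintro y ⟨k, rfl⟩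
      simp
    set ones : lp (fun _ : ℕ => ℝ) ∞ := ⟨fun _ => (1 : ℝ), hones⟩ with hones'
    have hones_apply : ∀ k : ℕ, ones k = 1 := fun k => rfl
    set S : ℝ := ∑' k : ℕ, β ^ (k + 1) with hS
    have hval : ∀ t : ℝ, f (xs + t • ones) - f xs = |t| + S * t ^ 2 := by
      intro t
      rw [hfx (xs + t • ones), hfxs]
      have hls : Filter.limsup (fun n : ℕ => |(xs + t • ones) n|) atTop = |t| := by
        have h1 : Tendsto (fun n : ℕ => |(xs + t • ones) n|) atTop (𝓝 (|t|)) := by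
          have : Tendsto (fun n : ℕ => xs n + t) atTop (𝓝 (0 + t)) := h0.add_const t
          simp only [zero_add] at this
          have h2 := this.abs
          apply h2.congr
          intro n
          rw [hcoord ones t n, hones_apply, mul_one]
        exact h1.limsup_eq
      have hts : (∑' k : ℕ, β ^ (k + 1) * ((xs + t • ones) k - xs k) ^ 2) = S * t ^ 2 := by
        have he : (fun k : ℕ => β ^ (k + 1) * ((xs + t • ones) k - xs k) ^ 2) =
            fun k => β ^ (k + 1) * t ^ 2 := by
          funext k
          rw [hcoord ones t k, hones_apply, mul_one]
          ring
        rw [he, tsum_mul_right]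
      rw [hls, hts]
      ring
    have hright : Tendsto (fun t : ℝ => (f (xs + t • ones) - f xs) / t) (𝓝[>] (0 : ℝ))
        (𝓝 1) := by
      have h1 : Tendsto (fun t : ℝ => 1 + S * t) (𝓝[>] (0 : ℝ)) (𝓝 1) := by
        exact ((continuous_const.add (continuous_const.mul continuous_id)).tendsto'
          (0 : ℝ) _ (by norm_num)).mono_left nhdsWithin_le_nhds
      apply h1.congr'
      filter_upwards [self_mem_nhdsWithin] with t ht
      rw [hval t, abs_of_pos ht, eq_div_iff (ne_of_gt (Set.mem_Ioi.mp ht))]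
      ring
    have hleft : Tendsto (fun t : ℝ => (f (xs + t • ones) - f xs) / t) (𝓝[<] (0 : ℝ))
        (𝓝 (-1)) := by
      have h1 : Tendsto (fun t : ℝ => -1 + S * t) (𝓝[<] (0 : ℝ)) (𝓝 (-1)) := by
        exact ((continuous_const.add (continuous_const.mul continuous_id)).tendsto'
          (0 : ℝ) _ (by norm_num)).mono_left nhdsWithin_le_nhds
      apply h1.congr'
      filter_upwards [self_mem_nhdsWithin] with t ht
      rw [hval t, abs_of_neg ht, eq_div_iff (ne_of_lt (Set.mem_Iio.mp ht))]
      ring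
    have hsub1 : 𝓝[>] (0 : ℝ) ≤ 𝓝[≠] (0 : ℝ) :=
      nhdsWithin_mono 0 (fun t ht => ne_of_gt ht)
    have hsub2 : 𝓝[<] (0 : ℝ) ≤ 𝓝[≠] (0 : ℝ) :=
      nhdsWithin_mono 0 (fun t ht => ne_of_lt ht)
    have e1 : F ones = 1 := tendsto_nhds_unique ((hF ones).mono_left hsub1) hright
    have e2 : F ones = -1 := tendsto_nhds_unique ((hF ones).mono_left hsub2) hleft
    rw [e1] at e2
    norm_num at e2
  · -- minimum at xs
    intro x
    rw [hfx x, hfxs]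
    have h1 : (0 : ℝ) ≤ Filter.limsup (fun n : ℕ => |x n|) atTop := by
      apply le_limsup_of_frequently_le
      · exact Frequently.of_forall (fun n => abs_nonneg _)
      · exact isBoundedUnder_of ⟨‖x‖, fun n => hbd x n⟩
    have h2 : (0 : ℝ) ≤ ∑' k : ℕ, β ^ (k + 1) * (x k - xs k) ^ 2 :=
      tsum_nonneg fun k => by positivity
    linarith
  · -- directional derivatives along e_n are 0
    intro n
    set e : lp (fun _ : ℕ => ℝ) ∞ := lp.single ∞ n (1 : ℝ) with he
    have hval : ∀ t : ℝ, f (xs + t • e) - f xs = β ^ (n + 1) * t ^ 2 := by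
      intro t
      rw [hfx (xs + t • e), hfxs]
      have hls : Filter.limsup (fun k : ℕ => |(xs + t • e) k|) atTop = 0 := by
        have h1 : Tendsto (fun k : ℕ => |(xs + t • e) k|) atTop (𝓝 0) := by
          have h2 : Tendsto (fun k : ℕ => |xs k|) atTop (𝓝 0) := by simpa using h0.abs
          apply h2.congr'
          filter_upwards [eventually_ge_atTop (n + 1)] with k hk
          rw [hcoord e t k, he, lp.single_apply_ne (E := fun _ : ℕ => ℝ) ∞ n (1 : ℝ) (by omega : k ≠ n), mul_zero,
            add_zero]
        exact h1.limsup_eq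
      have hts : (∑' k : ℕ, β ^ (k + 1) * ((xs + t • e) k - xs k) ^ 2) = β ^ (n + 1) * t ^ 2 := by
        rw [tsum_eq_single n]
        · rw [hcoord e t n, he, lp.single_apply_self (E := fun _ : ℕ => ℝ) ∞ n (1 : ℝ), mul_one]
          ring_nf
        · intro k hk
          rw [hcoord e t k, he, lp.single_apply_ne (E := fun _ : ℕ => ℝ) ∞ n (1 : ℝ) hk, mul_zero]
          ring_nf
      rw [hls, hts]
      ring
    have h1 : Tendsto (fun t : ℝ => β ^ (n + 1) * t) (𝓝[≠] (0 : ℝ)) (𝓝 0) := by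
      exact ((continuous_const.mul continuous_id).tendsto'
        (0 : ℝ) _ (by norm_num)).mono_left nhdsWithin_le_nhds
    apply h1.congr'
    filter_upwards [self_mem_nhdsWithin] with t ht
    have h3 : t ≠ 0 := ht
    rw [hval t, eq_div_iff h3]
    ring
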